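/- Let W be a symplectic vector space of dimension 2n and V a k-dimensional subspace. Fix a volume element μ ∈ Λ^{2n} W and let α_V ∈ Λ^{2n-k} W be the contraction of μ with a basis of V. If V is isotropic then α_V is coeffective (ω ∧ α_V = 0, viewing the wedge via the isomorphism induced by ω); if V is coisotropic then α_V is primitive (ι_π α_V = 0); if V is Lagrangian then α_V is both. -/

import Mathlib

/-!
Model of the exterior algebra of `V* = (ℝ^{2n})*`: a form is a family of
coefficients indexed by finite subsets `S ⊆ {0, …, 2n-1}` of coordinate
indices, representing `∑_S α_S dx_S`.  `wdg i` is wedging with `dxᵢ`,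
`ctr i` is contraction with `∂ᵢ`.  The symplectic form is
`ω = ∑_{i<n} dx_{2i} ∧ dx_{2i+1}` (0-indexed version of
`∑ dx_{2i-1} ∧ dx_{2i}`) and the dual bivector is
`π = ∑_{i<n} ∂_{2i} ∧ ∂_{2i+1}`.
-/

noncomputable section

abbrev Form := Finset ℕ → ℝ

/-- The sign `(-1)^{#{j ∈ S : j < i}}`. -/
def sgn (i : ℕ) (S : Finset ℕ) : ℝ := (-1 : ℝ) ^ (S.filter (· < i)).card

/-- Wedging with `dxᵢ`. -/
def wdg (i : ℕ) (α : Form) : Form :=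
  fun S => if i ∈ S then sgn i S * α (S.erase i) else 0

/-- Contraction with the coordinate vector field `∂ᵢ`. -/
def ctr (i : ℕ) (α : Form) : Form :=
  fun S => if i ∈ S then 0 else sgn i S * α (insert i S)

/-- The Lefschetz operator `L = ω ∧ ·` with `ω = ∑_{i<n} dx_{2i} ∧ dx_{2i+1}`. -/
def Lop (n : ℕ) (α : Form) : Form :=
  ∑ i ∈ Finset.range n, wdg (2 * i) (wdg (2 * i + 1) α)

/-- The dual Lefschetz operator `Λ = ι_π` with `π = ∑_{i<n} ∂_{2i} ∧ ∂_{2i+1}`. -/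
def Λop (n : ℕ) (α : Form) : Form :=
  ∑ i ∈ Finset.range n, ctr (2 * i + 1) (ctr (2 * i) α)

/-- The index-counting operator `H`, acting on `k`-forms as `(n - k)`. -/
def Hop (n : ℕ) (α : Form) : Form :=
  fun S => ((n : ℝ) - (S.card : ℝ)) * α S

/-- `α` only involves the coordinates `x_0, …, x_{2n-1}` of `ℝ^{2n}`. -/
def IsSupported (n : ℕ) (α : Form) : Prop :=
  ∀ S : Finset ℕ, ¬ S ⊆ Finset.range (2 * n) → α S = 0


/-- Vectors of `W = ℝ^{2n}`. -/
abbrev Vec (n : ℕ) := Fin (2 * n) → ℝ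

/-- Coordinates of a vector, extended by `0` to all of `ℕ`. -/
def coords (n : ℕ) (u : Vec n) (m : ℕ) : ℝ :=
  if h : m < 2 * n then u ⟨m, h⟩ else 0

/-- The standard symplectic form `ω = ∑_{i<n} dx_{2i} ∧ dx_{2i+1}` evaluated on
a pair of vectors. -/
def symp (n : ℕ) (u v : Vec n) : ℝ :=
  ∑ i ∈ Finset.range n,
    (coords n u (2 * i) * coords n v (2 * i + 1) -
      coords n u (2 * i + 1) * coords n v (2 * i))

/-- Contraction of a form with a vector `v ∈ ℝ^{2n}`: `ι_v = ∑ᵢ vᵢ ι_{∂ᵢ}`. -/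
def ctrVec (n : ℕ) (v : Vec n) (α : Form) : Form :=
  fun S => ∑ i ∈ Finset.range (2 * n), coords n v i * ctr i α S

/-- A fixed volume element `μ = dx_0 ∧ ⋯ ∧ dx_{2n-1} ∈ Λ^{2n} W`. -/
def vol (n : ℕ) : Form :=
  fun S => if S = Finset.range (2 * n) then 1 else 0

/-- The `(2n-k)`-form `α_V` obtained by contracting the basis `v_0, …, v_{k-1}`
of the subspace `V` into the volume element `μ`. -/
def alphaV (n k : ℕ) (v : Fin k → Vec n) : Form :=
  (List.finRange k).foldr (fun j β => ctrVec n (v j) β) (vol n)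

/-- `V = span v` is isotropic: `ω` vanishes on `V`. -/
def IsIsotropic (n k : ℕ) (v : Fin k → Vec n) : Prop :=
  ∀ i j, symp n (v i) (v j) = 0

/-- `V = span v` is coisotropic: the symplectic orthogonal of `V` is contained
in `V`. -/
def IsCoisotropic (n k : ℕ) (v : Fin k → Vec n) : Prop :=
  ∀ w : Vec n, (∀ j, symp n w (v j) = 0) → w ∈ Submodule.span ℝ (Set.range v)

-- sign lemmas
lemma sgn_mul_self (i : ℕ) (S : Finset ℕ) : sgn i S * sgn i S = 1 := by
  rw [sgn, ← pow_add]
  exact Even.neg_one_pow ⟨_, rfl⟩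

lemma sgn_insert (b i : ℕ) (S : Finset ℕ) (h : i ∉ S) :
    sgn b (insert i S) = if i < b then -sgn b S else sgn b S := by
  unfold sgn
  rw [Finset.filter_insert]
  split
  · rw [Finset.card_insert_of_notMem (by simp [h])]
    rw [pow_succ]; ring
  · rfl

lemma sgn_insert_self (i : ℕ) (S : Finset ℕ) (h : i ∉ S) :
    sgn i (insert i S) = sgn i S := by
  rw [sgn_insert _ _ _ h]; simp

lemma sgn_erase (b i : ℕ) (S : Finset ℕ) (h : i ∈ S) :
    sgn b (S.erase i) = if i < b then -sgn b S else sgn b S := by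
  have h2 : i ∉ S.erase i := Finset.notMem_erase i S
  have h3 := sgn_insert b i (S.erase i) h2
  rw [Finset.insert_erase h] at h3
  rw [h3]; split <;> ring

lemma sgn_erase_self (i : ℕ) (S : Finset ℕ) : sgn i (S.erase i) = sgn i S := by
  by_cases h : i ∈ S
  · rw [sgn_erase _ _ _ h]; simp
  · rw [Finset.erase_eq_of_notMem h]

lemma sgn_sdiff (n i : ℕ) (S : Finset ℕ) (hi : i < 2 * n) :
    sgn i (Finset.range (2 * n) \ S) = (-1 : ℝ) ^ i * sgn i S := by
  unfold sgn
  have hfilter : (Finset.range (2 * n) \ S).filter (· < i) = Finset.range i \ S := by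
    ext j
    simp only [Finset.mem_filter, Finset.mem_sdiff, Finset.mem_range]
    constructor
    · rintro ⟨⟨_, hj⟩, hji⟩; exact ⟨hji, hj⟩
    · rintro ⟨hji, hj⟩; exact ⟨⟨by omega, hj⟩, hji⟩
  have hfilter2 : S.filter (· < i) = S ∩ Finset.range i := by
    ext j; simp [Finset.mem_filter, and_comm]
  have hcard0 := Finset.card_sdiff_add_card_inter (Finset.range i) S
  have hle : (S.filter (· < i)).card ≤ i := by
    rw [hfilter2, Finset.inter_comm]
    calc (Finset.range i ∩ S).card ≤ (Finset.range i).card := Finset.card_le_card (Finset.inter_subset_left)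
    _ = i := Finset.card_range i
  have hcard : (Finset.range i \ S).card = i - (S.filter (· < i)).card := by
    rw [hfilter2, Finset.inter_comm]
    rw [Finset.card_range i] at hcard0
    omega
  rw [hfilter, hcard]
  set c := (S.filter (· < i)).card with hc
  have h1 : (-1 : ℝ) ^ (i - c) * (-1 : ℝ) ^ c = (-1 : ℝ) ^ i := by
    rw [← pow_add]; congr 1; omega
  have h2 : (-1 : ℝ) ^ c * (-1 : ℝ) ^ c = 1 := by
    rw [← pow_add]; exact Even.neg_one_pow ⟨_, rfl⟩
  calc (-1:ℝ) ^ (i - c) = (-1:ℝ) ^ (i-c) * ((-1:ℝ)^c * (-1:ℝ)^c) := by rw [h2, mul_one]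
  _ = ((-1:ℝ) ^ (i-c) * (-1:ℝ)^c) * (-1:ℝ)^c := by ring
  _ = (-1:ℝ)^i * (-1:ℝ)^c := by rw [h1]

-- core identities
lemma ctr_wdg (a b : ℕ) (α : Form) :
    ctr a (wdg b α) = fun S => (if a = b then α S else 0) - wdg b (ctr a α) S := by
  funext S
  by_cases hab : a = b
  · subst hab
    by_cases hS : a ∈ S
    · have key : sgn a S * (sgn a S * α S) = α S := by
        rw [← mul_assoc, sgn_mul_self, one_mul]
      simp only [ctr, wdg, hS, if_true, if_pos hS, if_neg (Finset.notMem_erase a S)]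
      rw [Finset.insert_erase hS, sgn_erase_self, key]
      ring
    · have key : sgn a S * (sgn a S * α S) = α S := by
        rw [← mul_assoc, sgn_mul_self, one_mul]
      simp only [ctr, wdg, hS, if_false, if_neg hS, Finset.mem_insert, true_or, if_true]
      rw [Finset.erase_insert hS, sgn_insert_self a S hS, key]
      ring
  · by_cases haS : a ∈ S <;> by_cases hbS : b ∈ S
    · have hbe : a ∈ S.erase b := Finset.mem_erase.2 ⟨hab, haS⟩
      simp [ctr, wdg, haS, hbS, hab, hbe]
    · have hbi : b ∉ insert a S := by simp [Ne.symm hab, hbS]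
      simp [ctr, wdg, haS, hbS, hab, hbi]
    · -- a ∉ S, b ∈ S
      have hbi : b ∈ insert a S := Finset.mem_insert_of_mem hbS
      have hae : a ∉ S.erase b := fun h => haS (Finset.mem_of_mem_erase h)
      simp only [ctr, wdg, if_neg haS, if_pos hbi, if_pos hbS, if_neg hae, if_neg hab]
      have hset : (insert a S).erase b = insert a (S.erase b) := by
        ext x
        simp only [Finset.mem_erase, Finset.mem_insert]
        constructor
        · rintro ⟨hx, (rfl | hxS)⟩
          · exact Or.inl rfl
          · exact Or.inr ⟨hx, hxS⟩
        · rintro (rfl | ⟨hxb, hxS⟩)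
          · exact ⟨hab, Or.inl rfl⟩
          · exact ⟨hxb, Or.inr hxS⟩
      rw [hset, sgn_insert b a S haS, sgn_erase a b S hbS]
      rcases lt_or_gt_of_ne hab with h | h
      · rw [if_pos h, if_neg (by omega)]; ring
      · rw [if_neg (by omega), if_pos h]; ring
    · have hbi : b ∉ insert a S := by simp [Ne.symm hab, hbS]
      simp [ctr, wdg, haS, hbS, hab, hbi]

lemma ctr_ctr (a b : ℕ) (α : Form) :
    ctr a (ctr b α) = fun S => -(ctr b (ctr a α) S) := by
  funext S
  by_cases hab : a = b
  · subst hab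
    simp [ctr]
  · by_cases haS : a ∈ S <;> by_cases hbS : b ∈ S
    · simp [ctr, haS, hbS]
    · simp [ctr, haS, hbS, hab, Ne.symm hab]
    · simp [ctr, haS, hbS, hab, Ne.symm hab]
    · have hai : a ∉ insert b S := by simp [hab, haS]
      have hbi : b ∉ insert a S := by simp [Ne.symm hab, hbS]
      simp only [ctr, if_neg haS, if_neg hbS, if_neg hai, if_neg hbi]
      rw [Finset.insert_comm b a S, sgn_insert b a S haS, sgn_insert a b S hbS]
      rcases lt_or_gt_of_ne hab with h | h
      · rw [if_pos h, if_neg (by omega)]; ring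
      · rw [if_neg (by omega), if_pos h]; ring

lemma wdg_wdg (a b : ℕ) (α : Form) :
    wdg a (wdg b α) = fun S => -(wdg b (wdg a α) S) := by
  funext S
  by_cases hab : a = b
  · subst hab
    simp [wdg]
  · by_cases haS : a ∈ S <;> by_cases hbS : b ∈ S
    · have hbe : b ∈ S.erase a := Finset.mem_erase.2 ⟨Ne.symm hab, hbS⟩
      have hae : a ∈ S.erase b := Finset.mem_erase.2 ⟨hab, haS⟩
      simp only [wdg, if_pos haS, if_pos hbS, if_pos hbe, if_pos hae]
      rw [Finset.erase_right_comm, sgn_erase b a S haS, sgn_erase a b S hbS]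
      rcases lt_or_gt_of_ne hab with h | h
      · rw [if_pos h, if_neg (by omega)]; ring
      · rw [if_neg (by omega), if_pos h]; ring
    · simp [wdg, haS, hbS, hab, Ne.symm hab]
    · simp [wdg, haS, hbS, hab, Ne.symm hab]
    · simp [wdg, haS, hbS]

-- new definitions
def delta0 : Form := fun S => if S = ∅ then 1 else 0

def wdgVec (n : ℕ) (u : Vec n) (X : Form) : Form :=
  fun S => ∑ i ∈ Finset.range (2 * n), coords n u i * wdg i X S

def Jv (n : ℕ) (u : Vec n) : Vec n :=
  fun x => if (x : ℕ) % 2 = 0 then -(coords n u ((x : ℕ) + 1)) else coords n u ((x : ℕ) - 1)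

def emv (n m : ℕ) : Vec n := fun x => if (x : ℕ) = m then 1 else 0

def Xv (n : ℕ) (ξ : Vec n →ₗ[ℝ] ℝ) : Vec n :=
  fun x => if (x : ℕ) % 2 = 0 then ξ (emv n ((x : ℕ) + 1)) else -(ξ (emv n ((x : ℕ) - 1)))

def dotp (n : ℕ) (u w : Vec n) : ℝ :=
  ∑ i ∈ Finset.range (2 * n), coords n u i * coords n w i

-- coords lemmas
lemma coords_lt {n : ℕ} (u : Vec n) {m : ℕ} (h : m < 2 * n) :
    coords n u m = u ⟨m, h⟩ := dif_pos h

lemma coords_add (n : ℕ) (u w : Vec n) (m : ℕ) :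
    coords n (u + w) m = coords n u m + coords n w m := by
  unfold coords; split <;> simp

lemma coords_smul (n : ℕ) (c : ℝ) (u : Vec n) (m : ℕ) :
    coords n (c • u) m = c * coords n u m := by
  unfold coords; split <;> simp

lemma coords_zero (n m : ℕ) : coords n (0 : Vec n) m = 0 := by
  unfold coords; split <;> simp

lemma coords_sum {n : ℕ} {ι : Type*} (t : Finset ι) (f : ι → Vec n) (m : ℕ) :
    coords n (∑ a ∈ t, f a) m = ∑ a ∈ t, coords n (f a) m := by
  unfold coords; split
  · simp [Finset.sum_apply]
  · simp

-- pointwise linearity helpers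
lemma wdg_apply_sum_smul (i : ℕ) {ι : Type*} (t : Finset ι) (c : ι → ℝ) (f : ι → Form)
    (S : Finset ℕ) :
    wdg i (fun T => ∑ j ∈ t, c j * f j T) S = ∑ j ∈ t, c j * wdg i (f j) S := by
  simp only [wdg]; split
  · rw [Finset.mul_sum]; exact Finset.sum_congr rfl fun j _ => by ring
  · simp

lemma ctr_apply_sum_smul (i : ℕ) {ι : Type*} (t : Finset ι) (c : ι → ℝ) (f : ι → Form)
    (S : Finset ℕ) :
    ctr i (fun T => ∑ j ∈ t, c j * f j T) S = ∑ j ∈ t, c j * ctr i (f j) S := by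
  simp only [ctr]; split
  · simp
  · rw [Finset.mul_sum]; exact Finset.sum_congr rfl fun j _ => by ring

lemma wdg_apply_finsum (i : ℕ) {ι : Type*} (t : Finset ι) (F : ι → Form) (S : Finset ℕ) :
    wdg i (∑ j ∈ t, F j) S = ∑ j ∈ t, wdg i (F j) S := by
  simp only [wdg, Finset.sum_apply]; split
  · rw [Finset.mul_sum]
  · simp

lemma ctr_apply_finsum (i : ℕ) {ι : Type*} (t : Finset ι) (F : ι → Form) (S : Finset ℕ) :
    ctr i (∑ j ∈ t, F j) S = ∑ j ∈ t, ctr i (F j) S := by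
  simp only [ctr, Finset.sum_apply]; split
  · simp
  · rw [Finset.mul_sum]

lemma ctr_apply_combo (a : ℕ) (c : ℝ) (X Y : Form) (S : Finset ℕ) :
    ctr a (fun T => c * X T - Y T) S = c * ctr a X S - ctr a Y S := by
  simp only [ctr]; split <;> ring

lemma wdg_apply_smul (i : ℕ) (c : ℝ) (X : Form) (S : Finset ℕ) :
    wdg i (fun T => c * X T) S = c * wdg i X S := by
  simp only [wdg]; split <;> ring

lemma ctr_apply_smul (i : ℕ) (c : ℝ) (X : Form) (S : Finset ℕ) :
    ctr i (fun T => c * X T) S = c * ctr i X S := by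
  simp only [ctr]; split <;> ring

lemma sum_range_two_mul (n : ℕ) (f : ℕ → ℝ) :
    ∑ m ∈ Finset.range (2 * n), f m = ∑ i ∈ Finset.range n, (f (2 * i) + f (2 * i + 1)) := by
  induction n with
  | zero => simp
  | succ n ih =>
    have h2 : 2 * (n + 1) = 2 * n + 1 + 1 := by ring
    rw [h2, Finset.sum_range_succ, Finset.sum_range_succ, ih, Finset.sum_range_succ]
    ring

-- commutation of contraction with wedge-by-vector
lemma ctr_wdgVec (n a : ℕ) (ha : a < 2 * n) (u : Vec n) (X : Form) :
    ctr a (wdgVec n u X) = fun S => coords n u a * X S - wdgVec n u (ctr a X) S := by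
  funext S
  have key : ctr a (wdgVec n u X) S
      = ∑ i ∈ Finset.range (2 * n), coords n u i * ctr a (wdg i X) S := by
    exact ctr_apply_sum_smul a _ _ _ S
  rw [key]
  have : ∀ i, ctr a (wdg i X) S = (if a = i then X S else 0) - wdg i (ctr a X) S :=
    fun i => congrFun (ctr_wdg a i X) S
  simp_rw [this, mul_sub, Finset.sum_sub_distrib, mul_ite, mul_zero]
  rw [Finset.sum_ite_eq, if_pos (Finset.mem_range.2 ha)]
  rfl

lemma ctrVec_wdgVec (n : ℕ) (w u : Vec n) (X : Form) :
    ctrVec n w (wdgVec n u X) = fun S => dotp n w u * X S - wdgVec n u (ctrVec n w X) S := by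
  funext S
  unfold ctrVec
  have : ∀ a ∈ Finset.range (2 * n),
      coords n w a * ctr a (wdgVec n u X) S
        = coords n w a * (coords n u a * X S - wdgVec n u (ctr a X) S) := by
    intro a ha
    rw [ctr_wdgVec n a (Finset.mem_range.1 ha) u X]
  rw [Finset.sum_congr rfl this]
  simp_rw [mul_sub, Finset.sum_sub_distrib]
  have h1 : ∑ a ∈ Finset.range (2 * n), coords n w a * (coords n u a * X S)
      = dotp n w u * X S := by
    rw [dotp, Finset.sum_mul]; exact Finset.sum_congr rfl fun a _ => by ring
  have h2 : ∑ a ∈ Finset.range (2 * n), coords n w a * wdgVec n u (ctr a X) S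
      = wdgVec n u (ctrVec n w X) S := by
    have e1 : ∀ i, wdg i (ctrVec n w X) S
        = ∑ a ∈ Finset.range (2 * n), coords n w a * wdg i (ctr a X) S :=
      fun i => wdg_apply_sum_smul i (Finset.range (2 * n))
        (fun a => coords n w a) (fun a => ctr a X) S
    have e2 : wdgVec n u (ctrVec n w X) S
        = ∑ i ∈ Finset.range (2 * n), coords n u i * wdg i (ctrVec n w X) S := rfl
    rw [e2]
    simp_rw [e1, Finset.mul_sum]
    rw [Finset.sum_comm]
    apply Finset.sum_congr rfl
    intro a _
    have e3 : wdgVec n u (ctr a X) S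
        = ∑ i ∈ Finset.range (2 * n), coords n u i * wdg i (ctr a X) S := rfl
    rw [e3, Finset.mul_sum]
    apply Finset.sum_congr rfl
    intro i _
    ring
  rw [h1, h2]
  rfl

lemma wdgVec_wdgVec (n : ℕ) (u w : Vec n) (X : Form) :
    wdgVec n u (wdgVec n w X) = fun S => -(wdgVec n w (wdgVec n u X) S) := by
  funext S
  have expand : ∀ p q : Vec n, wdgVec n p (wdgVec n q X) S
      = ∑ i ∈ Finset.range (2 * n), ∑ j ∈ Finset.range (2 * n),
          coords n p i * (coords n q j * wdg i (wdg j X) S) := by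
    intro p q
    unfold wdgVec
    apply Finset.sum_congr rfl
    intro i _
    rw [show (fun S => ∑ j ∈ Finset.range (2*n), coords n q j * wdg j X S)
        = fun T => ∑ j ∈ Finset.range (2*n), coords n q j * wdg j X T from rfl]
    rw [wdg_apply_sum_smul, Finset.mul_sum]
  rw [expand u w, expand w u, Finset.sum_comm]
  rw [← Finset.sum_neg_distrib]
  apply Finset.sum_congr rfl
  intro j _
  rw [← Finset.sum_neg_distrib]
  apply Finset.sum_congr rfl
  intro i _
  rw [congrFun (wdg_wdg i j X) S]
  ring

lemma dot_Jv (n : ℕ) (u w : Vec n) : dotp n (Jv n u) w = symp n u w := by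
  unfold dotp symp
  rw [sum_range_two_mul]
  apply Finset.sum_congr rfl
  intro i hi
  have hi' : i < n := Finset.mem_range.1 hi
  have h1 : coords n (Jv n u) (2 * i) = -(coords n u (2 * i + 1)) := by
    rw [coords_lt _ (by omega)]
    show (if (2 * i) % 2 = 0 then _ else _) = _
    rw [if_pos (by omega)]
  have h2 : coords n (Jv n u) (2 * i + 1) = coords n u (2 * i) := by
    rw [coords_lt _ (by omega)]
    show (if (2 * i + 1) % 2 = 0 then _ else _) = _
    rw [if_neg (by omega)]
    norm_num
  rw [h1, h2]
  ring

lemma Λop_apply (n : ℕ) (X : Form) (S : Finset ℕ) :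
    Λop n X S = ∑ i ∈ Finset.range n, ctr (2 * i + 1) (ctr (2 * i) X) S := by
  unfold Λop; rw [Finset.sum_apply]

lemma Lop_apply (n : ℕ) (X : Form) (S : Finset ℕ) :
    Lop n X S = ∑ i ∈ Finset.range n, wdg (2 * i) (wdg (2 * i + 1) X) S := by
  unfold Lop; rw [Finset.sum_apply]

lemma Λop_wdgVec (n : ℕ) (u : Vec n) (X : Form) :
    Λop n (wdgVec n u X) = fun S => ctrVec n (Jv n u) X S + wdgVec n u (Λop n X) S := by
  funext S
  rw [Λop_apply]
  have step : ∀ i ∈ Finset.range n,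
      ctr (2 * i + 1) (ctr (2 * i) (wdgVec n u X)) S
        = coords n u (2 * i) * ctr (2 * i + 1) X S
          - (coords n u (2 * i + 1) * ctr (2 * i) X S
            - wdgVec n u (ctr (2 * i + 1) (ctr (2 * i) X)) S) := by
    intro i hi
    have hi' : i < n := Finset.mem_range.1 hi
    rw [ctr_wdgVec n (2 * i) (by omega) u X]
    rw [ctr_apply_combo]
    rw [congrFun (ctr_wdgVec n (2 * i + 1) (by omega) u (ctr (2 * i) X)) S]
  rw [Finset.sum_congr rfl step]
  have hR1 : ctrVec n (Jv n u) X S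
      = ∑ i ∈ Finset.range n, (-(coords n u (2 * i + 1)) * ctr (2 * i) X S
          + coords n u (2 * i) * ctr (2 * i + 1) X S) := by
    unfold ctrVec
    rw [sum_range_two_mul]
    apply Finset.sum_congr rfl
    intro i hi
    have hi' : i < n := Finset.mem_range.1 hi
    have h1 : coords n (Jv n u) (2 * i) = -(coords n u (2 * i + 1)) := by
      rw [coords_lt _ (by omega)]
      show (if (2 * i) % 2 = 0 then _ else _) = _
      rw [if_pos (by omega)]
    have h2 : coords n (Jv n u) (2 * i + 1) = coords n u (2 * i) := by
      rw [coords_lt _ (by omega)]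
      show (if (2 * i + 1) % 2 = 0 then _ else _) = _
      rw [if_neg (by omega)]
      rfl
    rw [h1, h2]
  have hR2 : wdgVec n u (Λop n X) S
      = ∑ i ∈ Finset.range n, wdgVec n u (ctr (2 * i + 1) (ctr (2 * i) X)) S := by
    have e2 : wdgVec n u (Λop n X) S
        = ∑ j ∈ Finset.range (2 * n), coords n u j * wdg j (Λop n X) S := rfl
    rw [e2]
    have e1 : ∀ j, wdg j (Λop n X) S
        = ∑ i ∈ Finset.range n, wdg j (ctr (2 * i + 1) (ctr (2 * i) X)) S := by
      intro j
      exact wdg_apply_finsum j (Finset.range n) _ S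
    simp_rw [e1, Finset.mul_sum]
    rw [Finset.sum_comm]
    apply Finset.sum_congr rfl
    intro i _
    rfl
  rw [hR1, hR2, ← Finset.sum_add_distrib]
  apply Finset.sum_congr rfl
  intro i _
  ring

-- zero lemmas
lemma ctr_zero_form (i : ℕ) : ctr i (0 : Form) = 0 := by
  funext S; simp [ctr]

lemma wdg_zero_form (i : ℕ) : wdg i (0 : Form) = 0 := by
  funext S; simp [wdg]

lemma wdgVec_zero_form (n : ℕ) (u : Vec n) : wdgVec n u (0 : Form) = 0 := by
  funext S; simp [wdgVec, wdg]

lemma ctr_delta0 (i : ℕ) : ctr i delta0 = 0 := by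
  funext S; simp [ctr, delta0, Finset.insert_ne_empty]

lemma ctrVec_delta0 (n : ℕ) (w : Vec n) : ctrVec n w delta0 = 0 := by
  funext S
  unfold ctrVec
  have : ∀ i ∈ Finset.range (2 * n), coords n w i * ctr i delta0 S = 0 := by
    intro i _
    rw [ctr_delta0]
    simp
  rw [Finset.sum_congr rfl this]
  simp

lemma Λop_delta0 (n : ℕ) : Λop n delta0 = 0 := by
  funext S
  rw [Λop_apply]
  have : ∀ i ∈ Finset.range n, ctr (2 * i + 1) (ctr (2 * i) delta0) S = 0 := by
    intro i _
    rw [ctr_delta0, ctr_zero_form]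
    rfl
  rw [Finset.sum_congr rfl this]
  simp

/-- The multivector `v_0 ∧ ⋯ ∧ v_{k-1}` over a list of indices. -/
def foldwdg (n k : ℕ) (v : Fin k → Vec n) (l : List (Fin k)) : Form :=
  l.foldr (fun j X => wdgVec n (v j) X) delta0

lemma iso_fold (n k : ℕ) (v : Fin k → Vec n) (hiso : IsIsotropic n k v) :
    ∀ l : List (Fin k),
      (∀ j : Fin k, ctrVec n (Jv n (v j)) (foldwdg n k v l) = 0) ∧
      Λop n (foldwdg n k v l) = 0 := by
  intro l
  induction l with
  | nil => exact ⟨fun j => ctrVec_delta0 n _, Λop_delta0 n⟩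
  | cons a t ih =>
    obtain ⟨ih1, ih2⟩ := ih
    have hfold : foldwdg n k v (a :: t) = wdgVec n (v a) (foldwdg n k v t) := rfl
    constructor
    · intro j
      rw [hfold, ctrVec_wdgVec]
      funext S
      have hd : dotp n (Jv n (v j)) (v a) = 0 := by rw [dot_Jv]; exact hiso j a
      rw [hd, ih1 j, wdgVec_zero_form]
      simp
    · rw [hfold, Λop_wdgVec]
      funext S
      rw [ih1 a, ih2, wdgVec_zero_form]
      simp

lemma iso_Λop_fold (n k : ℕ) (v : Fin k → Vec n) (hiso : IsIsotropic n k v) :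
    Λop n (foldwdg n k v (List.finRange k)) = 0 :=
  (iso_fold n k v hiso (List.finRange k)).2

lemma wdgVec_self_zero (n : ℕ) (u : Vec n) (X : Form) :
    wdgVec n u (wdgVec n u X) = 0 := by
  funext S
  have h := congrFun (wdgVec_wdgVec n u u X) S
  simp only [Pi.zero_apply]
  linarith

lemma wdgVec_add_vec (n : ℕ) (x y : Vec n) (X : Form) :
    wdgVec n (x + y) X = fun S => wdgVec n x X S + wdgVec n y X S := by
  funext S
  unfold wdgVec
  rw [← Finset.sum_add_distrib]
  apply Finset.sum_congr rfl
  intro i _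
  rw [coords_add]
  ring

lemma wdgVec_smul_vec (n : ℕ) (c : ℝ) (x : Vec n) (X : Form) :
    wdgVec n (c • x) X = fun S => c * wdgVec n x X S := by
  funext S
  unfold wdgVec
  rw [Finset.mul_sum]
  apply Finset.sum_congr rfl
  intro i _
  rw [coords_smul]
  ring

lemma wdgVec_zero_vec (n : ℕ) (X : Form) : wdgVec n (0 : Vec n) X = 0 := by
  funext S
  unfold wdgVec
  have : ∀ i ∈ Finset.range (2 * n), coords n (0 : Vec n) i * wdg i X S = 0 := by
    intro i _; rw [coords_zero]; ring
  rw [Finset.sum_congr rfl this]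
  simp

lemma wdgVec_fold_mem (n k : ℕ) (v : Fin k → Vec n) :
    ∀ (l : List (Fin k)) (j : Fin k), j ∈ l → wdgVec n (v j) (foldwdg n k v l) = 0 := by
  intro l
  induction l with
  | nil => intro j hj; exact absurd hj List.not_mem_nil
  | cons a t ih =>
    intro j hj
    have hfold : foldwdg n k v (a :: t) = wdgVec n (v a) (foldwdg n k v t) := rfl
    rw [hfold]
    rcases List.mem_cons.1 hj with rfl | hjt
    · exact wdgVec_self_zero n (v j) _
    · funext S
      rw [congrFun (wdgVec_wdgVec n (v j) (v a) _) S, ih j hjt, wdgVec_zero_form]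
      simp

lemma wdgVec_span_zero (n k : ℕ) (v : Fin k → Vec n) (x : Vec n)
    (hx : x ∈ Submodule.span ℝ (Set.range v)) :
    wdgVec n x (foldwdg n k v (List.finRange k)) = 0 := by
  induction hx using Submodule.span_induction with
  | mem y hy =>
    obtain ⟨j, rfl⟩ := hy
    exact wdgVec_fold_mem n k v (List.finRange k) j (List.mem_finRange j)
  | zero => exact wdgVec_zero_vec n _
  | add y z _ _ hy hz =>
    rw [wdgVec_add_vec]
    funext S
    rw [hy, hz]
    simp
  | smul c y _ hy =>
    rw [wdgVec_smul_vec]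
    funext S
    rw [hy]
    simp

lemma coords_Xv_even (n : ℕ) (ξ : Vec n →ₗ[ℝ] ℝ) {i : ℕ} (hi : i < n) :
    coords n (Xv n ξ) (2 * i) = ξ (emv n (2 * i + 1)) := by
  rw [coords_lt _ (by omega)]
  show (if (2 * i) % 2 = 0 then _ else _) = _
  rw [if_pos (by omega)]

lemma coords_Xv_odd (n : ℕ) (ξ : Vec n →ₗ[ℝ] ℝ) {i : ℕ} (hi : i < n) :
    coords n (Xv n ξ) (2 * i + 1) = -(ξ (emv n (2 * i))) := by
  rw [coords_lt _ (by omega)]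
  show (if (2 * i + 1) % 2 = 0 then _ else _) = _
  rw [if_neg (by omega)]
  rfl

lemma vec_eq_sum_emv (n : ℕ) (u : Vec n) :
    u = ∑ m ∈ Finset.range (2 * n), coords n u m • emv n m := by
  funext x
  rw [Finset.sum_apply]
  have : ∀ m ∈ Finset.range (2 * n),
      (coords n u m • emv n m) x = if (x : ℕ) = m then coords n u m else 0 := by
    intro m _
    rw [Pi.smul_apply, smul_eq_mul]
    unfold emv
    split <;> simp
  rw [Finset.sum_congr rfl this, Finset.sum_ite_eq, if_pos (Finset.mem_range.2 x.isLt)]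
  rw [coords_lt _ x.isLt]

lemma symp_Xv (n : ℕ) (ξ : Vec n →ₗ[ℝ] ℝ) (u : Vec n) :
    symp n (Xv n ξ) u = ξ u := by
  unfold symp
  have step : ∀ i ∈ Finset.range n,
      coords n (Xv n ξ) (2 * i) * coords n u (2 * i + 1) -
        coords n (Xv n ξ) (2 * i + 1) * coords n u (2 * i)
      = coords n u (2 * i) * ξ (emv n (2 * i)) + coords n u (2 * i + 1) * ξ (emv n (2 * i + 1)) := by
    intro i hi
    have hi' : i < n := Finset.mem_range.1 hi
    rw [coords_Xv_even n ξ hi', coords_Xv_odd n ξ hi']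
    ring
  rw [Finset.sum_congr rfl step]
  have : ∑ i ∈ Finset.range n,
      (coords n u (2 * i) * ξ (emv n (2 * i)) + coords n u (2 * i + 1) * ξ (emv n (2 * i + 1)))
      = ∑ m ∈ Finset.range (2 * n), coords n u m * ξ (emv n m) :=
    (sum_range_two_mul n fun m => coords n u m * ξ (emv n m)).symm
  rw [this]
  have : ∑ m ∈ Finset.range (2 * n), coords n u m * ξ (emv n m)
      = ξ (∑ m ∈ Finset.range (2 * n), coords n u m • emv n m) := by
    rw [map_sum]
    apply Finset.sum_congr rfl
    intro m _
    rw [map_smul, smul_eq_mul]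
  rw [this, ← vec_eq_sum_emv]

lemma wdg_emv (n m : ℕ) (hm : m < 2 * n) (X : Form) :
    wdgVec n (emv n m) X = wdg m X := by
  funext S
  unfold wdgVec
  have : ∀ i ∈ Finset.range (2 * n),
      coords n (emv n m) i * wdg i X S = if m = i then wdg i X S else 0 := by
    intro i hi
    rw [coords_lt _ (Finset.mem_range.1 hi)]
    show (if (i : ℕ) = m then (1:ℝ) else 0) * wdg i X S = _
    by_cases h : i = m
    · subst h; simp
    · rw [if_neg h, if_neg (fun hh => h hh.symm)]; ring
  rw [Finset.sum_congr rfl this, Finset.sum_ite_eq, if_pos (Finset.mem_range.2 hm)]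

lemma wdgVec_sum_vec (n : ℕ) {ι : Type*} (t : Finset ι) (c : ι → ℝ) (f : ι → Vec n) (X : Form) :
    wdgVec n (∑ a ∈ t, c a • f a) X = fun S => ∑ a ∈ t, c a * wdgVec n (f a) X S := by
  funext S
  unfold wdgVec
  have hc : ∀ i, coords n (∑ a ∈ t, c a • f a) i = ∑ a ∈ t, c a * coords n (f a) i := by
    intro i
    rw [coords_sum]
    exact Finset.sum_congr rfl fun a _ => coords_smul n (c a) (f a) i
  simp_rw [hc, Finset.sum_mul]
  rw [Finset.sum_comm]
  apply Finset.sum_congr rfl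
  intro a _
  rw [Finset.mul_sum]
  apply Finset.sum_congr rfl
  intro i _
  ring

lemma wdgVec_apply_form_sum_smul (n : ℕ) (x : Vec n) {ι : Type*} (t : Finset ι)
    (c : ι → ℝ) (G : ι → Form) (S : Finset ℕ) :
    wdgVec n x (fun T => ∑ b ∈ t, c b * G b T) S = ∑ b ∈ t, c b * wdgVec n x (G b) S := by
  unfold wdgVec
  simp_rw [wdg_apply_sum_smul, Finset.mul_sum]
  rw [Finset.sum_comm]
  apply Finset.sum_congr rfl
  intro b _
  exact Finset.sum_congr rfl fun i _ => by ring

lemma coiso_Lop (n k : ℕ) (v : Fin k → Vec n) (hco : IsCoisotropic n k v) :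
    Lop n (foldwdg n k v (List.finRange k)) = 0 := by
  classical
  set Vmv := foldwdg n k v (List.finRange k) with hVmv
  set Vs := Submodule.span ℝ (Set.range v) with hVs
  obtain ⟨U, hU⟩ := Submodule.exists_isCompl Vs
  set m := Module.finrank ℝ U with hmdef
  let b : Module.Basis (Fin m) ℝ U := Module.finBasis ℝ U
  let pr : Vec n →ₗ[ℝ] U := U.projectionOnto Vs hU.symm
  let ξ : Fin m → (Vec n →ₗ[ℝ] ℝ) := fun a => (b.coord a).comp pr
  let wv : Fin m → Vec n := fun a => (b a : Vec n)
  have hpr : ∀ x : Vec n, ((pr x : U) : Vec n) = ∑ a : Fin m, ξ a x • wv a := by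
    intro x
    have h := congrArg (U.subtype) (b.sum_repr (pr x))
    rw [map_sum] at h
    simp only [map_smul, Submodule.subtype_apply] at h
    rw [← h]
    apply Finset.sum_congr rfl
    intro a _
    congr 1
  have hsub : ∀ x : Vec n, x - ∑ a : Fin m, ξ a x • wv a ∈ Vs := by
    intro x
    rw [← hpr x]
    have h0 : pr (x - ((pr x : U) : Vec n)) = 0 := by
      rw [map_sub]
      have h2 : pr ((pr x : U) : Vec n) = pr x :=
        Submodule.linearProjOfIsCompl_apply_left hU.symm (pr x)
      rw [h2, sub_self]
    exact (Submodule.linearProjOfIsCompl_apply_eq_zero_iff hU.symm).1 h0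
  have hξV : ∀ (a : Fin m) (y : Vec n), y ∈ Vs → ξ a y = 0 := by
    intro a y hy
    show b.coord a (pr y) = 0
    rw [(Submodule.linearProjOfIsCompl_apply_eq_zero_iff hU.symm).2 hy]
    simp
  have hker : ∀ y ∈ Vs, wdgVec n y Vmv = 0 := fun y hy => wdgVec_span_zero n k v y hy
  have hkerT : ∀ (b' : Fin m) (y : Vec n), y ∈ Vs → wdgVec n y (wdgVec n (wv b') Vmv) = 0 := by
    intro b' y hy
    funext S
    rw [congrFun (wdgVec_wdgVec n y (wv b') Vmv) S, hker y hy, wdgVec_zero_form]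
    simp
  have hexp : ∀ (x : Vec n) (Y : Form), (∀ y ∈ Vs, wdgVec n y Y = 0) →
      wdgVec n x Y = fun S => ∑ a : Fin m, ξ a x * wdgVec n (wv a) Y S := by
    intro x Y hY
    have hx0 : x = (x - ∑ a : Fin m, ξ a x • wv a) + ∑ a : Fin m, ξ a x • wv a := by abel
    funext S
    calc wdgVec n x Y S
        = wdgVec n ((x - ∑ a : Fin m, ξ a x • wv a) + ∑ a : Fin m, ξ a x • wv a) Y S := by
          rw [← hx0]
      _ = wdgVec n (x - ∑ a : Fin m, ξ a x • wv a) Y S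
          + wdgVec n (∑ a : Fin m, ξ a x • wv a) Y S := by
          rw [congrFun (wdgVec_add_vec n _ _ Y) S]
      _ = ∑ a : Fin m, ξ a x * wdgVec n (wv a) Y S := by
          rw [hY _ (hsub x), congrFun (wdgVec_sum_vec n Finset.univ (fun a => ξ a x) wv Y) S]
          simp
  set M : Fin m → Fin m → ℝ :=
    fun a b' => ∑ i ∈ Finset.range n, ξ a (emv n (2 * i)) * ξ b' (emv n (2 * i + 1)) with hMdef
  have hXvVs : ∀ a : Fin m, Xv n (ξ a) ∈ Vs := by
    intro a
    apply hco
    intro j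
    rw [symp_Xv]
    exact hξV a (v j) (Submodule.subset_span ⟨j, rfl⟩)
  have hMsymm : ∀ a b' : Fin m, M a b' = M b' a := by
    intro a b'
    have h0 : symp n (Xv n (ξ a)) (Xv n (ξ b')) = 0 := by
      rw [symp_Xv]
      exact hξV a _ (hXvVs b')
    have hcomp : symp n (Xv n (ξ a)) (Xv n (ξ b')) = M a b' - M b' a := by
      unfold symp
      rw [hMdef, ← Finset.sum_sub_distrib]
      apply Finset.sum_congr rfl
      intro i hi
      have hi' : i < n := Finset.mem_range.1 hi
      rw [coords_Xv_even n (ξ a) hi', coords_Xv_odd n (ξ a) hi',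
          coords_Xv_even n (ξ b') hi', coords_Xv_odd n (ξ b') hi']
      ring
    have := hcomp ▸ h0
    linarith
  funext S
  rw [Lop_apply]
  set T : Fin m → Fin m → ℝ :=
    fun a b' => wdgVec n (wv a) (wdgVec n (wv b') Vmv) S with hTdef
  have hstep : ∀ i ∈ Finset.range n,
      wdg (2 * i) (wdg (2 * i + 1) Vmv) S
        = ∑ b' : Fin m, ∑ a : Fin m,
            ξ a (emv n (2 * i)) * ξ b' (emv n (2 * i + 1)) * T a b' := by
    intro i hi
    have hi' : i < n := Finset.mem_range.1 hi
    rw [← wdg_emv n (2 * i + 1) (by omega) Vmv, ← wdg_emv n (2 * i) (by omega) _]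
    rw [hexp (emv n (2 * i + 1)) Vmv hker]
    rw [wdgVec_apply_form_sum_smul]
    apply Finset.sum_congr rfl
    intro b' _
    rw [congrFun (hexp (emv n (2 * i)) (wdgVec n (wv b') Vmv) (hkerT b')) S]
    rw [Finset.mul_sum]
    apply Finset.sum_congr rfl
    intro a _
    rw [hTdef]
    ring
  rw [Finset.sum_congr rfl hstep]
  have hswap : ∑ i ∈ Finset.range n, ∑ b' : Fin m, ∑ a : Fin m,
        ξ a (emv n (2 * i)) * ξ b' (emv n (2 * i + 1)) * T a b'
      = ∑ a : Fin m, ∑ b' : Fin m, M a b' * T a b' := by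
    calc ∑ i ∈ Finset.range n, ∑ b' : Fin m, ∑ a : Fin m,
          ξ a (emv n (2 * i)) * ξ b' (emv n (2 * i + 1)) * T a b'
        = ∑ b' : Fin m, ∑ i ∈ Finset.range n, ∑ a : Fin m,
            ξ a (emv n (2 * i)) * ξ b' (emv n (2 * i + 1)) * T a b' := Finset.sum_comm
      _ = ∑ b' : Fin m, ∑ a : Fin m, ∑ i ∈ Finset.range n,
            ξ a (emv n (2 * i)) * ξ b' (emv n (2 * i + 1)) * T a b' :=
          Finset.sum_congr rfl fun b' _ => Finset.sum_comm
      _ = ∑ b' : Fin m, ∑ a : Fin m, M a b' * T a b' := by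
          apply Finset.sum_congr rfl
          intro b' _
          apply Finset.sum_congr rfl
          intro a _
          rw [hMdef, Finset.sum_mul]
      _ = ∑ a : Fin m, ∑ b' : Fin m, M a b' * T a b' := Finset.sum_comm
  rw [hswap]
  have hanti : ∀ a b' : Fin m, T a b' = -(T b' a) := by
    intro a b'
    rw [hTdef]
    exact congrFun (wdgVec_wdgVec n (wv a) (wv b') Vmv) S
  have hneg : (∑ a : Fin m, ∑ b' : Fin m, M a b' * T a b')
      = -(∑ a : Fin m, ∑ b' : Fin m, M a b' * T a b') := by
    calc (∑ a : Fin m, ∑ b' : Fin m, M a b' * T a b')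
        = ∑ b' : Fin m, ∑ a : Fin m, M a b' * T a b' := Finset.sum_comm
      _ = ∑ b' : Fin m, ∑ a : Fin m, M b' a * -(T b' a) := by
          apply Finset.sum_congr rfl
          intro b' _
          apply Finset.sum_congr rfl
          intro a _
          rw [hMsymm a b', hanti a b']
      _ = -(∑ b' : Fin m, ∑ a : Fin m, M b' a * T b' a) := by
          rw [← Finset.sum_neg_distrib]
          apply Finset.sum_congr rfl
          intro b' _
          rw [← Finset.sum_neg_distrib]
          apply Finset.sum_congr rfl
          intro a _
          ring
      _ = -(∑ a : Fin m, ∑ b' : Fin m, M a b' * T a b') := rfl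
  have hzero : (∑ a : Fin m, ∑ b' : Fin m, M a b' * T a b') = 0 := by linarith
  rw [hzero]
  simp

-- duality
def eps (S : Finset ℕ) : ℝ := (-1 : ℝ) ^ (S.sum id)

def Iot (n : ℕ) (X : Form) : Form :=
  fun S => if S ⊆ Finset.range (2 * n) then eps S * X (Finset.range (2 * n) \ S) else 0

lemma eps_insert (i : ℕ) (S : Finset ℕ) (h : i ∉ S) :
    eps (insert i S) = (-1 : ℝ) ^ i * eps S := by
  unfold eps
  rw [Finset.sum_insert h, pow_add]
  rfl

lemma eps_erase (i : ℕ) (S : Finset ℕ) (h : i ∈ S) :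
    eps (S.erase i) = (-1 : ℝ) ^ i * eps S := by
  have h1 : eps S = (-1 : ℝ) ^ i * eps (S.erase i) := by
    conv_lhs => rw [← Finset.insert_erase h]
    rw [eps_insert i _ (Finset.notMem_erase i S)]
  have hsq : (-1 : ℝ) ^ i * (-1 : ℝ) ^ i = 1 := by
    rw [← pow_add]; exact Even.neg_one_pow ⟨i, rfl⟩
  calc eps (S.erase i) = ((-1:ℝ)^i * (-1:ℝ)^i) * eps (S.erase i) := by rw [hsq, one_mul]
    _ = (-1:ℝ)^i * ((-1:ℝ)^i * eps (S.erase i)) := by ring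
    _ = (-1:ℝ)^i * eps S := by rw [← h1]

lemma ctr_Iot {n a : ℕ} (ha : a < 2 * n) (X : Form) :
    ctr a (Iot n X) = Iot n (wdg a X) := by
  funext S
  by_cases haS : a ∈ S
  · have h1 : a ∉ Finset.range (2 * n) \ S := fun h => (Finset.mem_sdiff.1 h).2 haS
    simp only [ctr, Iot, wdg, if_pos haS, if_neg h1]
    split <;> simp
  · by_cases hsub : S ⊆ Finset.range (2 * n)
    · have hins : insert a S ⊆ Finset.range (2 * n) :=
        Finset.insert_subset (Finset.mem_range.2 ha) hsub
      have hmem : a ∈ Finset.range (2 * n) \ S :=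
        Finset.mem_sdiff.2 ⟨Finset.mem_range.2 ha, haS⟩
      have hset : (Finset.range (2 * n) \ S).erase a = Finset.range (2 * n) \ insert a S := by
        ext x
        simp only [Finset.mem_erase, Finset.mem_sdiff, Finset.mem_insert, Finset.mem_range]
        constructor
        · rintro ⟨hxa, hx2, hxS⟩; exact ⟨hx2, fun h => h.elim hxa hxS⟩
        · rintro ⟨hx2, hx⟩; exact ⟨fun h => hx (Or.inl h), hx2, fun h => hx (Or.inr h)⟩
      simp only [ctr, Iot, wdg, if_neg haS, if_pos hsub, if_pos hins, if_pos hmem]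
      rw [hset, eps_insert a S haS, sgn_sdiff n a S ha]
      ring
    · have hins : ¬ insert a S ⊆ Finset.range (2 * n) := fun h =>
        hsub (fun x hx => h (Finset.mem_insert_of_mem hx))
      simp only [ctr, Iot, if_neg haS, if_neg hsub, if_neg hins]
      ring

lemma wdg_Iot {n a : ℕ} (ha : a < 2 * n) (X : Form) :
    wdg a (Iot n X) = Iot n (ctr a X) := by
  funext S
  by_cases haS : a ∈ S
  · by_cases hsub : S ⊆ Finset.range (2 * n)
    · have hers : S.erase a ⊆ Finset.range (2 * n) :=
        Finset.Subset.trans (Finset.erase_subset a S) hsub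
      have hnm : a ∉ Finset.range (2 * n) \ S := fun h => (Finset.mem_sdiff.1 h).2 haS
      have hset : insert a (Finset.range (2 * n) \ S) = Finset.range (2 * n) \ (S.erase a) := by
        ext x
        simp only [Finset.mem_insert, Finset.mem_sdiff, Finset.mem_erase, Finset.mem_range]
        constructor
        · rintro (rfl | ⟨hx2, hxS⟩)
          · exact ⟨ha, fun h => h.1 rfl⟩
          · exact ⟨hx2, fun h => hxS h.2⟩
        · rintro ⟨hx2, hx⟩
          by_cases hxa : x = a
          · exact Or.inl hxa
          · exact Or.inr ⟨hx2, fun hxS => hx ⟨hxa, hxS⟩⟩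
      simp only [wdg, Iot, ctr, if_pos haS, if_pos hsub, if_pos hers, if_neg hnm]
      rw [hset, eps_erase a S haS, sgn_sdiff n a S ha]
      ring
    · have hers : ¬ S.erase a ⊆ Finset.range (2 * n) := by
        intro h
        apply hsub
        intro x hx
        by_cases hxa : x = a
        · subst hxa; exact Finset.mem_range.2 ha
        · exact h (Finset.mem_erase.2 ⟨hxa, hx⟩)
      simp only [wdg, Iot, if_pos haS, if_neg hsub, if_neg hers]
      ring
  · have hmem : S ⊆ Finset.range (2 * n) → a ∈ Finset.range (2 * n) \ S :=
      fun _ => Finset.mem_sdiff.2 ⟨Finset.mem_range.2 ha, haS⟩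
    simp only [wdg, Iot, ctr, if_neg haS]
    split
    · rw [if_pos (hmem (by assumption))]
      ring
    · rfl

lemma Iot_neg (n : ℕ) (X : Form) (S : Finset ℕ) :
    Iot n (fun T => -(X T)) S = -(Iot n X S) := by
  unfold Iot; split <;> ring

lemma Iot_zero_apply (n : ℕ) (S : Finset ℕ) : Iot n (0 : Form) S = 0 := by
  unfold Iot; split <;> simp

lemma ctrVec_Iot (n : ℕ) (u : Vec n) (X : Form) :
    ctrVec n u (Iot n X) = Iot n (wdgVec n u X) := by
  funext S
  unfold ctrVec
  have step : ∀ i ∈ Finset.range (2 * n),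
      coords n u i * ctr i (Iot n X) S = coords n u i * Iot n (wdg i X) S := by
    intro i hi
    rw [ctr_Iot (Finset.mem_range.1 hi)]
  rw [Finset.sum_congr rfl step]
  by_cases hsub : S ⊆ Finset.range (2 * n)
  · simp only [Iot, if_pos hsub]
    have : wdgVec n u X (Finset.range (2 * n) \ S)
        = ∑ i ∈ Finset.range (2 * n), coords n u i * wdg i X (Finset.range (2 * n) \ S) := rfl
    rw [this, Finset.mul_sum]
    exact Finset.sum_congr rfl fun i _ => by ring
  · simp only [Iot, if_neg hsub]
    simp

lemma Λop_Iot (n : ℕ) (X : Form) :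
    Λop n (Iot n X) = fun S => -(Iot n (Lop n X) S) := by
  funext S
  rw [Λop_apply]
  have step : ∀ i ∈ Finset.range n,
      ctr (2 * i + 1) (ctr (2 * i) (Iot n X)) S
        = -(Iot n (wdg (2 * i) (wdg (2 * i + 1) X)) S) := by
    intro i hi
    have hi' : i < n := Finset.mem_range.1 hi
    rw [ctr_Iot (show 2 * i < 2 * n by omega), ctr_Iot (show 2 * i + 1 < 2 * n by omega)]
    rw [wdg_wdg (2 * i + 1) (2 * i) X]
    exact Iot_neg n _ S
  rw [Finset.sum_congr rfl step, Finset.sum_neg_distrib]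
  congr 1
  by_cases hsub : S ⊆ Finset.range (2 * n)
  · simp only [Iot, if_pos hsub]
    rw [Lop_apply, Finset.mul_sum]
  · simp only [Iot, if_neg hsub]
    simp

lemma Lop_Iot (n : ℕ) (X : Form) :
    Lop n (Iot n X) = fun S => -(Iot n (Λop n X) S) := by
  funext S
  rw [Lop_apply]
  have step : ∀ i ∈ Finset.range n,
      wdg (2 * i) (wdg (2 * i + 1) (Iot n X)) S
        = -(Iot n (ctr (2 * i + 1) (ctr (2 * i) X)) S) := by
    intro i hi
    have hi' : i < n := Finset.mem_range.1 hi
    rw [wdg_Iot (show 2 * i + 1 < 2 * n by omega), wdg_Iot (show 2 * i < 2 * n by omega)]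
    rw [ctr_ctr (2 * i) (2 * i + 1) X]
    exact Iot_neg n _ S
  rw [Finset.sum_congr rfl step, Finset.sum_neg_distrib]
  congr 1
  by_cases hsub : S ⊆ Finset.range (2 * n)
  · simp only [Iot, if_pos hsub]
    rw [Λop_apply, Finset.mul_sum]
  · simp only [Iot, if_neg hsub]
    simp

lemma even_sum_range (n : ℕ) : Even ((Finset.range (2 * n)).sum id + n) := by
  induction n with
  | zero => simp
  | succ m ih =>
    have h2 : 2 * (m + 1) = 2 * m + 1 + 1 := by ring
    rw [h2, Finset.sum_range_succ, Finset.sum_range_succ]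
    obtain ⟨c, hc⟩ := ih
    refine ⟨c + 2 * m + 1, ?_⟩
    simp only [id] at hc ⊢
    omega

lemma vol_eq (n : ℕ) :
    vol n = Iot n (fun S => if S = ∅ then ((-1 : ℝ)) ^ n else 0) := by
  funext S
  unfold vol Iot
  by_cases hS : S = Finset.range (2 * n)
  · subst hS
    rw [if_pos rfl, if_pos (Finset.Subset.refl _), Finset.sdiff_self]
    beta_reduce
    rw [if_pos rfl]
    unfold eps
    rw [← pow_add]
    exact (Even.neg_one_pow (even_sum_range n)).symm
  · rw [if_neg hS]
    by_cases hsub : S ⊆ Finset.range (2 * n)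
    · rw [if_pos hsub]
      have hne : ¬ (Finset.range (2 * n) \ S = ∅) := by
        intro h
        apply hS
        apply Finset.Subset.antisymm hsub
        intro x hx
        by_contra hxS
        have hx2 : x ∈ Finset.range (2 * n) \ S := Finset.mem_sdiff.2 ⟨hx, hxS⟩
        rw [h] at hx2
        exact absurd hx2 (Finset.notMem_empty x)
      beta_reduce
      rw [if_neg hne]
      ring
    · rw [if_neg hsub]

lemma fold_ctrVec_Iot (n k : ℕ) (v : Fin k → Vec n) (B : Form) :
    ∀ l : List (Fin k),
      l.foldr (fun j β => ctrVec n (v j) β) (Iot n B)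
        = Iot n (l.foldr (fun j X => wdgVec n (v j) X) B) := by
  intro l
  induction l with
  | nil => rfl
  | cons a t ih =>
    show ctrVec n (v a) (t.foldr (fun j β => ctrVec n (v j) β) (Iot n B)) = _
    rw [ih, ctrVec_Iot]
    rfl

lemma wdgVec_apply_form_smul (n : ℕ) (x : Vec n) (c : ℝ) (X : Form) (S : Finset ℕ) :
    wdgVec n x (fun T => c * X T) S = c * wdgVec n x X S := by
  unfold wdgVec
  simp_rw [wdg_apply_smul, Finset.mul_sum]
  exact Finset.sum_congr rfl fun i _ => by ring

lemma fold_smul (n k : ℕ) (v : Fin k → Vec n) (c : ℝ) :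
    ∀ l : List (Fin k),
      l.foldr (fun j X => wdgVec n (v j) X) (fun S => c * delta0 S)
        = fun S => c * (foldwdg n k v l) S := by
  intro l
  induction l with
  | nil => rfl
  | cons a t ih =>
    show wdgVec n (v a) (t.foldr (fun j X => wdgVec n (v j) X) (fun S => c * delta0 S)) = _
    rw [ih]
    funext S
    rw [wdgVec_apply_form_smul]
    rfl

lemma Λop_apply_smul (n : ℕ) (c : ℝ) (X : Form) (S : Finset ℕ) :
    Λop n (fun T => c * X T) S = c * Λop n X S := by
  rw [Λop_apply, Λop_apply, Finset.mul_sum]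
  apply Finset.sum_congr rfl
  intro i _
  have h1 : ctr (2 * i) (fun T => c * X T) = fun T => c * ctr (2 * i) X T :=
    funext fun T => ctr_apply_smul (2 * i) c X T
  rw [h1, ctr_apply_smul]

lemma Lop_apply_smul (n : ℕ) (c : ℝ) (X : Form) (S : Finset ℕ) :
    Lop n (fun T => c * X T) S = c * Lop n X S := by
  rw [Lop_apply, Lop_apply, Finset.mul_sum]
  apply Finset.sum_congr rfl
  intro i _
  have h1 : wdg (2 * i + 1) (fun T => c * X T) = fun T => c * wdg (2 * i + 1) X T :=
    funext fun T => wdg_apply_smul (2 * i + 1) c X T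
  rw [h1, wdg_apply_smul]

lemma alphaV_eq_Iot (n k : ℕ) (v : Fin k → Vec n) :
    alphaV n k v
      = Iot n (fun S => (-1 : ℝ) ^ n * foldwdg n k v (List.finRange k) S) := by
  have hB : vol n = Iot n (fun S => (-1 : ℝ) ^ n * delta0 S) := by
    have hfun : (fun S => if S = ∅ then ((-1 : ℝ)) ^ n else 0)
        = (fun S : Finset ℕ => (-1 : ℝ) ^ n * delta0 S) := by
      funext S
      unfold delta0
      split <;> ring
    rw [vol_eq, hfun]
  show (List.finRange k).foldr (fun j β => ctrVec n (v j) β) (vol n) = _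
  rw [hB, fold_ctrVec_Iot n k v _ (List.finRange k),
    fold_smul n k v ((-1 : ℝ) ^ n) (List.finRange k)]


/-- Let `W` be a symplectic vector space of dimension `2n` and
`V ⊆ W` a `k`-dimensional subspace with basis `v_0, …, v_{k-1}`; let
`α_V ∈ Λ^{2n-k} W` be the contraction of the basis of `V` into a fixed volume
element `μ`.  If `V` is isotropic then `α_V` is coeffective (`ω ∧ α_V = 0`);
if `V` is coisotropic then `α_V` is primitive (`ι_π α_V = 0`); if `V` is
Lagrangian then `α_V` is both. -/
theorem alphaV_isotropic_coisotropic (n k : ℕ) (v : Fin k → Vec n)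
    (hv : LinearIndependent ℝ v) :
    (IsIsotropic n k v → Lop n (alphaV n k v) = 0) ∧
    (IsCoisotropic n k v → Λop n (alphaV n k v) = 0) ∧
    (IsIsotropic n k v → IsCoisotropic n k v →
      Lop n (alphaV n k v) = 0 ∧ Λop n (alphaV n k v) = 0) := by
  have hiso : IsIsotropic n k v → Lop n (alphaV n k v) = 0 := by
    intro hI
    rw [alphaV_eq_Iot, Lop_Iot]
    have hzero : Λop n (fun T => (-1 : ℝ) ^ n * foldwdg n k v (List.finRange k) T) = 0 := by
      funext T
      rw [Λop_apply_smul n _ _ T, iso_Λop_fold n k v hI]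
      simp
    rw [hzero]
    funext S
    rw [Iot_zero_apply]
    simp
  have hcoi : IsCoisotropic n k v → Λop n (alphaV n k v) = 0 := by
    intro hC
    rw [alphaV_eq_Iot, Λop_Iot]
    have hzero : Lop n (fun T => (-1 : ℝ) ^ n * foldwdg n k v (List.finRange k) T) = 0 := by
      funext T
      rw [Lop_apply_smul n _ _ T, coiso_Lop n k v hC]
      simp
    rw [hzero]
    funext S
    rw [Iot_zero_apply]
    simp
  exact ⟨hiso, hcoi, fun hI hC => ⟨hiso hI, hcoi hC⟩⟩


end
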